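/- Let A be a symmetric real 3×3 matrix with eigenvalues 0 < λ₁ ≤ λ₂ < λ₃ satisfying λ₂ ≥ λ₁λ₃/(λ₃ − λ₁), and a corresponding orthonormal basis of eigenvectors v₁, v₂, v₃. Let u = α₂v₂ + α₃v₃ with α₂² = λ₂/(λ₂ + λ₃) and α₃² = λ₃/(λ₂ + λ₃). Then for every unit eigenvector v of A, Δ(v,u) ≥ λ₁. -/

import Mathlib

open Matrix

noncomputable section

abbrev M3 : Type := Matrix (Fin 3) (Fin 3) ℝ
abbrev V3 : Type := Fin 3 → ℝ

/-- skew-symmetric matrix associated to `x`: `skew x *ᵥ y = x ×₃ y`. -/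
def skew (x : V3) : M3 :=
  !![0, -x 2, x 1; x 2, 0, -x 0; -x 1, x 0, 0]

/-- the special orthogonal group SO(3) as a subset of 3×3 matrices -/
def SO3 : Set M3 := {R | Rᵀ * R = 1 ∧ R.det = 1}

/-- Rodrigues formula -/
def Ra (θ : ℝ) (u : V3) : M3 :=
  1 + Real.sin θ • skew u + (1 - Real.cos θ) • (skew u * skew u)

/-- `psi M = vec (P_a M)`, the vector part of the antisymmetric projection -/
def psi (M : M3) : V3 :=
  ![(M 2 1 - M 1 2) / 2, (M 0 2 - M 2 0) / 2, (M 1 0 - M 0 1) / 2]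

/-- the angular-warping transformation `T(R,θ) = R · Ra(θ,u)` -/
def Tmap (u : V3) (R : M3) (θ : ℝ) : M3 := R * Ra θ u

/-- the potential function `U(R,θ)` on SO(3) × ℝ -/
def Ufun (A : M3) (u : V3) (γ : ℝ) (R : M3) (θ : ℝ) : ℝ :=
  (A * (1 - Tmap u R θ)).trace + γ / 2 * θ ^ 2

/-- Euclidean norm on ℝ³ -/
def enorm3 (x : V3) : ℝ := Real.sqrt (x ⬝ᵥ x)

/-- Frobenius norm of a 3×3 matrix -/
def fnorm (M : M3) : ℝ := Real.sqrt ((Mᵀ * M).trace)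

/-- `E(M) := (tr(M) I − Mᵀ)/2` -/
def Emap (M : M3) : M3 := (2⁻¹ : ℝ) • (M.trace • (1 : M3) - Mᵀ)

/-- `D_R(R,θ)` from Lemma 2 -/
def DR (A : M3) (u : V3) (R : M3) (θ : ℝ) : M3 :=
  Ra θ u * Emap (A * Tmap u R θ) * (Ra θ u)ᵀ

/-- `D_θ(R,θ)` from Lemma 2 -/
def Dθ (A : M3) (u : V3) (R : M3) (θ : ℝ) : V3 :=
  (Ra θ u * Emap (A * Tmap u R θ)) *ᵥ u - skew (Ra θ u *ᵥ psi (A * Tmap u R θ)) *ᵥ u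

/-- Δ(v,u) from the construction of the synergistic gap -/
def Delta (A : M3) (v u : V3) : ℝ :=
  u ⬝ᵥ ((A.trace • (1 : M3) - A - (2 * (v ⬝ᵥ A *ᵥ v)) • ((1 : M3) - vecMulVec v v)) *ᵥ u)

/-- `v` is a unit eigenvector of `A` -/
def IsUnitEigen (A : M3) (v : V3) : Prop :=
  v ⬝ᵥ v = 1 ∧ ∃ lam : ℝ, A *ᵥ v = lam • v

/-- Ā := (tr(A) I − A)/2 -/
def Abar (A : M3) : M3 := (2⁻¹ : ℝ) • (A.trace • (1 : M3) - A)

/-- `lam` is an eigenvalue of `M` -/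
def IsEigen (M : M3) (lam : ℝ) : Prop := ∃ w : V3, w ≠ 0 ∧ M *ᵥ w = lam • w

lemma symmdot (A : M3) (hA : A.IsSymm) (x y : V3) :
    x ⬝ᵥ (A *ᵥ y) = (A *ᵥ x) ⬝ᵥ y := by
  rw [Matrix.dotProduct_mulVec]
  congr 1
  rw [← Matrix.mulVec_transpose, hA.eq]

lemma mulVec_dot (M : M3) (x y : V3) : (M *ᵥ x) ⬝ᵥ y = x ⬝ᵥ (Mᵀ *ᵥ y) := by
  rw [Matrix.dotProduct_mulVec, Matrix.vecMul_transpose]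

lemma vecMulVec_mulVec' (v w u : V3) : vecMulVec v w *ᵥ u = (w ⬝ᵥ u) • v := by
  ext i
  simp [Matrix.vecMulVec, Matrix.mulVec, dotProduct, Finset.mul_sum, mul_comm,
    mul_left_comm]

lemma Delta_eq (A : M3) (v u : V3) :
    Delta A v u = A.trace * (u ⬝ᵥ u) - u ⬝ᵥ (A *ᵥ u)
      - 2 * (v ⬝ᵥ A *ᵥ v) * ((u ⬝ᵥ u) - (v ⬝ᵥ u) * (v ⬝ᵥ u)) := by
  simp only [Delta, Matrix.sub_mulVec, Matrix.smul_mulVec, Matrix.one_mulVec,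
    dotProduct_sub, dotProduct_smul, vecMulVec_mulVec', smul_eq_mul, dotProduct_comm u v]

set_option maxHeartbeats 2000000 in
theorem Delta_lower_bound_case2
    (A : M3) (hA : A.IsSymm) (lam1 lam2 lam3 : ℝ) (v1 v2 v3 : V3)
    (hv1 : A *ᵥ v1 = lam1 • v1) (hv2 : A *ᵥ v2 = lam2 • v2) (hv3 : A *ᵥ v3 = lam3 • v3)
    (hn1 : v1 ⬝ᵥ v1 = 1) (hn2 : v2 ⬝ᵥ v2 = 1) (hn3 : v3 ⬝ᵥ v3 = 1)
    (ho12 : v1 ⬝ᵥ v2 = 0) (ho13 : v1 ⬝ᵥ v3 = 0) (ho23 : v2 ⬝ᵥ v3 = 0)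
    (hpos : 0 < lam1) (hle : lam1 ≤ lam2) (hlt : lam2 < lam3)
    (hcase : lam2 ≥ lam1 * lam3 / (lam3 - lam1))
    (α2 α3 : ℝ) (hα2 : α2 ^ 2 = lam2 / (lam2 + lam3)) (hα3 : α3 ^ 2 = lam3 / (lam2 + lam3))
    (u : V3) (hu : u = α2 • v2 + α3 • v3) :
    ∀ v : V3, IsUnitEigen A v → Delta A v u ≥ lam1 := by
  intro v hv
  obtain ⟨hvn, lam, hlam⟩ := hv
  have hs : 0 < lam2 + lam3 := by linarith
  have hcase' : lam2 * lam3 ≥ lam1 * (lam2 + lam3) := by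
    rw [ge_iff_le, div_le_iff₀ (by linarith)] at hcase
    nlinarith
  have h12 : lam1 < lam2 := by nlinarith
  have ho21 : v2 ⬝ᵥ v1 = 0 := by rwa [dotProduct_comm]
  have ho31 : v3 ⬝ᵥ v1 = 0 := by rwa [dotProduct_comm]
  have ho32 : v3 ⬝ᵥ v2 = 0 := by rwa [dotProduct_comm]
  -- the orthogonal matrix with rows v1 v2 v3
  set Q : M3 := Matrix.of (fun i j => ![v1, v2, v3] i j) with hQ
  have hd : ∀ x y : V3, x ⬝ᵥ y = x 0 * y 0 + x 1 * y 1 + x 2 * y 2 := by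
    intro x y; simp [dotProduct, Fin.sum_univ_three]
  have hQQt : Q * Qᵀ = 1 := by
    ext i j
    fin_cases i <;> fin_cases j <;>
      simp [hQ, Matrix.mul_apply, Matrix.one_apply, Fin.sum_univ_three] <;>
      linarith [hd v1 v1 ▸ hn1, hd v2 v2 ▸ hn2, hd v3 v3 ▸ hn3,
        hd v1 v2 ▸ ho12, hd v1 v3 ▸ ho13, hd v2 v3 ▸ ho23,
        hd v2 v1 ▸ ho21, hd v3 v1 ▸ ho31, hd v3 v2 ▸ ho32]
  have hQtQ : Qᵀ * Q = 1 := mul_eq_one_comm.mp hQQt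
  -- coefficients of v in the eigenbasis
  set c1 : ℝ := v1 ⬝ᵥ v with hc1
  set c2 : ℝ := v2 ⬝ᵥ v with hc2
  set c3 : ℝ := v3 ⬝ᵥ v with hc3
  -- Parseval
  have hQv : Q *ᵥ v = ![c1, c2, c3] := by
    ext i
    fin_cases i <;> simp [hQ, Matrix.mulVec, hc1, hc2, hc3]
  have hpar : c1 ^ 2 + c2 ^ 2 + c3 ^ 2 = 1 := by
    have h : (Q *ᵥ v) ⬝ᵥ (Q *ᵥ v) = 1 := by
      rw [mulVec_dot, Matrix.mulVec_mulVec, hQtQ, Matrix.one_mulVec, hvn]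
    rw [hQv, hd] at h
    simpa [pow_two] using h
  -- trace
  have hAQt : A * Qᵀ = Qᵀ * Matrix.diagonal ![lam1, lam2, lam3] := by
    ext i j
    fin_cases j <;>
      simp [hQ, Matrix.mul_apply, Matrix.diagonal, Fin.sum_univ_three] <;>
      [(have := congrFun hv1 i); (have := congrFun hv2 i); (have := congrFun hv3 i)] <;>
      simp [Matrix.mulVec, hd, Pi.smul_apply, smul_eq_mul] at this <;> linarith
  have htr : A.trace = lam1 + lam2 + lam3 := by
    calc A.trace = (A * (Qᵀ * Q)).trace := by rw [hQtQ, Matrix.mul_one]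
    _ = ((A * Qᵀ) * Q).trace := by rw [Matrix.mul_assoc]
    _ = ((Qᵀ * Matrix.diagonal ![lam1, lam2, lam3]) * Q).trace := by rw [hAQt]
    _ = ((Q * Qᵀ) * Matrix.diagonal ![lam1, lam2, lam3]).trace := by
        rw [Matrix.trace_mul_comm, Matrix.mul_assoc]
    _ = lam1 + lam2 + lam3 := by
        rw [hQQt, Matrix.one_mul]
        simp [Matrix.trace, Fin.sum_univ_three, Matrix.diagonal]
  -- eigen relations
  have heig : ∀ (w : V3) (mu : ℝ), A *ᵥ w = mu • w → mu * (w ⬝ᵥ v) = lam * (w ⬝ᵥ v) := by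
    intro w mu hw
    have h1 : w ⬝ᵥ (A *ᵥ v) = lam * (w ⬝ᵥ v) := by
      rw [hlam, dotProduct_smul, smul_eq_mul]
    have h2 : w ⬝ᵥ (A *ᵥ v) = mu * (w ⬝ᵥ v) := by
      rw [symmdot A hA, hw, smul_dotProduct, smul_eq_mul]
    linarith
  have he1 := heig v1 lam1 hv1
  have he2 := heig v2 lam2 hv2
  have he3 := heig v3 lam3 hv3
  rw [← hc1] at he1; rw [← hc2] at he2; rw [← hc3] at he3
  -- u quantities
  have huu : u ⬝ᵥ u = 1 := by
    rw [hu]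
    simp only [add_dotProduct, dotProduct_add, smul_dotProduct, dotProduct_smul,
      smul_eq_mul, hn2, hn3, ho23, ho32]
    have hsum : α2 ^ 2 + α3 ^ 2 = 1 := by
      rw [hα2, hα3, ← add_div, div_self (ne_of_gt hs)]
    ring_nf
    exact hsum
  have ha2s : α2 ^ 2 * (lam2 + lam3) = lam2 := by
    rw [hα2]; exact div_mul_cancel₀ lam2 (ne_of_gt hs)
  have ha3s : α3 ^ 2 * (lam2 + lam3) = lam3 := by
    rw [hα3]; exact div_mul_cancel₀ lam3 (ne_of_gt hs)
  have huAu : u ⬝ᵥ (A *ᵥ u) = α2 ^ 2 * lam2 + α3 ^ 2 * lam3 := by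
    rw [hu]
    simp only [Matrix.mulVec_add, Matrix.mulVec_smul, hv2, hv3, add_dotProduct,
      dotProduct_add, smul_dotProduct, dotProduct_smul, smul_eq_mul, hn2, hn3, ho23, ho32]
    ring
  have hvu : v ⬝ᵥ u = α2 * c2 + α3 * c3 := by
    rw [hu]
    simp only [dotProduct_add, dotProduct_smul, smul_eq_mul, dotProduct_comm v v2,
      dotProduct_comm v v3, ← hc2, ← hc3]
  have hvAv : v ⬝ᵥ (A *ᵥ v) = lam := by
    rw [hlam, dotProduct_smul, smul_eq_mul, hvn, mul_one]
  rw [Delta_eq, htr, huu, huAu, hvu, hvAv]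
  clear_value c1 c2 c3
  clear hQv hAQt hQQt hQtQ hQ hd heig hlam hu hA hv1 hv2 hv3 hn1 hn2 hn3 ho12 ho13 ho23
    ho21 ho31 ho32 hvn huu huAu hvu hvAv htr hα2 hα3 hc1 hc2 hc3 Q u v A v1 v2 v3
  by_cases h2 : c2 = 0
  · by_cases h3 : c3 = 0
    · -- v is (up to sign) v1 : lam = lam1
      have hc1sq : c1 ^ 2 = 1 := by rw [h2, h3] at hpar; nlinarith
      have hlam1 : lam = lam1 := by
        have hc1ne : c1 ≠ 0 := by intro h; rw [h] at hc1sq; norm_num at hc1sq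
        have := he1
        rcases mul_eq_mul_right_iff.mp this with h | h
        · exact h.symm
        · exact absurd h hc1ne
      have e2 : α2 ^ 2 * lam2 * (lam2 + lam3) = lam2 * lam2 := by
        linear_combination lam2 * ha2s
      have e3 : α3 ^ 2 * lam3 * (lam2 + lam3) = lam3 * lam3 := by
        linear_combination lam3 * ha3s
      rw [hlam1, h2, h3]
      nlinarith [e2, e3, hs, hcase']
    · -- lam = lam3
      have hlam3 : lam = lam3 := by
        have := he3
        rcases mul_eq_mul_right_iff.mp this.symm with h | h
        · exact h
        · exact absurd h h3
      have hc1z : c1 = 0 := by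
        rcases mul_eq_mul_right_iff.mp (hlam3 ▸ he1) with h | h
        · exact absurd h (by linarith : lam1 ≠ lam3)
        · exact h
      have hc3sq : c3 ^ 2 = 1 := by rw [h2, hc1z] at hpar; nlinarith
      have e2 : α2 ^ 2 * lam2 * (lam2 + lam3) = lam2 * lam2 := by
        linear_combination lam2 * ha2s
      have e3 : α3 ^ 2 * lam3 * (lam2 + lam3) = lam3 * lam3 := by
        linear_combination lam3 * ha3s
      have e33 : α3 ^ 2 * c3 ^ 2 * lam3 * (lam2 + lam3) = lam3 * lam3 := by
        linear_combination (lam3 * c3 ^ 2) * ha3s + lam3 ^ 2 * hc3sq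
      rw [hlam3, h2]
      nlinarith [e2, e3, e33, hs]
  · -- lam = lam2
    have hlam2 : lam = lam2 := by
      rcases mul_eq_mul_right_iff.mp he2.symm with h | h
      · exact h
      · exact absurd h h2
    have hc1z : c1 = 0 := by
      rcases mul_eq_mul_right_iff.mp (hlam2 ▸ he1) with h | h
      · exact absurd h (by linarith : lam1 ≠ lam2)
      · exact h
    have hc3z : c3 = 0 := by
      rcases mul_eq_mul_right_iff.mp (hlam2 ▸ he3) with h | h
      · exact absurd h (by linarith : lam3 ≠ lam2)
      · exact h
    have hc2sq : c2 ^ 2 = 1 := by rw [hc1z, hc3z] at hpar; nlinarith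
    have e2 : α2 ^ 2 * lam2 * (lam2 + lam3) = lam2 * lam2 := by
      linear_combination lam2 * ha2s
    have e3 : α3 ^ 2 * lam3 * (lam2 + lam3) = lam3 * lam3 := by
      linear_combination lam3 * ha3s
    have e22 : α2 ^ 2 * c2 ^ 2 * lam2 * (lam2 + lam3) = lam2 * lam2 := by
      linear_combination (lam2 * c2 ^ 2) * ha2s + lam2 ^ 2 * hc2sq
    rw [hlam2, hc3z]
    nlinarith [e2, e3, e22, hs]
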